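/- Let A : ℝ → ℝ be continuously differentiable, nonnegative and 2π-periodic, and let φ : ℝ → ℝ be twice continuously differentiable with φ′ 2π-periodic, φ′(t) > 0 for all t, and φ(t + 2π) = φ(t) + 2πm for some fixed integer m. Then for every positive integer n, |∫₀^{2π} A(t) e^{i(φ(t) + nt)} dt| ≤ ∫₀^{2π} ( |A′(t)|/(φ′(t) + n) + 2A(t)|φ″(t)|/(φ′(t) + n)² ) dt. -/

import Mathlib

open Real MeasureTheory

/-- The key oscillatory-integral (van der Corput type) estimate: one integration by parts
bounds the negative Fourier coefficients of `A(t) e^{iφ(t)}`. -/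
theorem oscillatory_integral_bound (A φ : ℝ → ℝ)
    (hA : ContDiff ℝ 1 A) (hAnonneg : ∀ t, 0 ≤ A t) (hAper : Function.Periodic A (2 * π))
    (hφ : ContDiff ℝ 2 φ) (hφ'per : Function.Periodic (deriv φ) (2 * π))
    (hφ'pos : ∀ t, 0 < deriv φ t)
    (m : ℤ) (hφper : ∀ t, φ (t + 2 * π) = φ t + 2 * π * m)
    (n : ℕ) (hn : 0 < n) :
    ‖∫ t in (0:ℝ)..(2 * π), (A t : ℂ) * Complex.exp (Complex.I * (φ t + n * t))‖ ≤
      ∫ t in (0:ℝ)..(2 * π),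
        (|deriv A t| / (deriv φ t + n) +
          2 * A t * |deriv (deriv φ) t| / (deriv φ t + n) ^ 2) := by
  have hpi : (0:ℝ) < 2 * π := by positivity
  -- smoothness facts
  have hAd : Differentiable ℝ A := hA.differentiable one_ne_zero
  have hA'c : Continuous (deriv A) := hA.continuous_deriv le_rfl
  have hφd : Differentiable ℝ φ := hφ.differentiable (by norm_num)
  have hφ'1 : ContDiff ℝ 1 (deriv φ) := by
    have h2 : ContDiff ℝ ((1:ℕ)+1) φ := by exact_mod_cast hφ
    exact_mod_cast (contDiff_succ_iff_deriv.mp h2).2.2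
  have hφ'd : Differentiable ℝ (deriv φ) := hφ'1.differentiable one_ne_zero
  have hφ''c : Continuous (deriv (deriv φ)) := hφ'1.continuous_deriv le_rfl
  -- abbreviations
  set p : ℝ → ℝ := fun t => deriv φ t + n with hpdef
  set q : ℝ → ℝ := fun t => deriv (deriv φ) t with hqdef
  have hp_pos : ∀ t, 0 < p t := fun t =>
    add_pos_of_pos_of_nonneg (hφ'pos t) (Nat.cast_nonneg n)
  have hpc : Continuous p := (hφ'1.continuous).add continuous_const
  have hqc : Continuous q := hφ''c
  set ψ : ℝ → ℝ := fun t => φ t + n * t with hψdef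
  have hψd : ∀ t, HasDerivAt ψ (p t) t := by
    intro t
    have h1 : HasDerivAt (fun t : ℝ => (n:ℝ) * t) ((n:ℝ) * 1) t :=
      (hasDerivAt_id t).const_mul (n:ℝ)
    have h3 := (hφd t).hasDerivAt.add h1
    simp only [mul_one] at h3
    exact h3
  have hpd : ∀ t, HasDerivAt p (q t) t := fun t =>
    ((hφ'd t).hasDerivAt).add_const _
  -- complex pieces
  have hden : ∀ t, (Complex.I * (p t : ℂ)) ≠ 0 := fun t =>
    mul_ne_zero Complex.I_ne_zero (by exact_mod_cast (hp_pos t).ne')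
  set v : ℝ → ℂ := fun t => Complex.exp (Complex.I * (ψ t : ℂ)) with hvdef
  have hvd : ∀ t, HasDerivAt v (Complex.I * (p t : ℂ) * v t) t := by
    intro t
    have h1 : HasDerivAt (fun t => ((ψ t : ℝ) : ℂ)) (p t : ℂ) t := (hψd t).ofReal_comp
    have h2 : HasDerivAt (fun t => Complex.I * (ψ t : ℂ)) (Complex.I * (p t : ℂ)) t :=
      h1.const_mul Complex.I
    simpa [hvdef, mul_comm] using h2.cexp
  have hvnorm : ∀ t, ‖v t‖ = 1 := by
    intro t
    simp [hvdef, Complex.norm_exp]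
  have hvc : Continuous v :=
    Complex.continuous_exp.comp (continuous_const.mul (Complex.continuous_ofReal.comp
      (hφd.continuous.add (continuous_const.mul continuous_id))))
  set u : ℝ → ℂ := fun t => (A t : ℂ) / (Complex.I * (p t : ℂ)) with hudef
  have hud : ∀ t, HasDerivAt u
      ((((deriv A t : ℝ) : ℂ) * (Complex.I * (p t : ℂ)) - (A t : ℂ) * (Complex.I * (q t : ℂ))) /
        (Complex.I * (p t : ℂ)) ^ 2) t := by
    intro t
    have hnum : HasDerivAt (fun t => ((A t : ℝ) : ℂ)) ((deriv A t : ℝ) : ℂ) t :=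
      ((hAd t).hasDerivAt).ofReal_comp
    have hden' : HasDerivAt (fun t => Complex.I * ((p t : ℝ) : ℂ)) (Complex.I * (q t : ℂ)) t :=
      ((hpd t).ofReal_comp).const_mul Complex.I
    exact hnum.div hden' (hden t)
  set E : ℝ → ℂ := fun t =>
    ((((deriv A t : ℝ) : ℂ) * (Complex.I * (p t : ℂ)) - (A t : ℂ) * (Complex.I * (q t : ℂ))) /
      (Complex.I * (p t : ℂ)) ^ 2) * v t with hEdef
  set g : ℝ → ℂ := fun t => u t * v t with hgdef
  have hgd : ∀ t, HasDerivAt g ((A t : ℂ) * v t + E t) t := by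
    intro t
    have h := (hud t).mul (hvd t)
    refine h.congr_deriv ?_
    have h0 := hden t
    have hu : u t * (Complex.I * (p t : ℂ) * v t) = (A t : ℂ) * v t := by
      simp only [hudef]
      rw [div_mul_eq_mul_div, mul_div_assoc, mul_comm (Complex.I * _) (v t), mul_div_assoc,
        div_self h0, mul_one]
    rw [hu]
    simp only [hEdef]
    ring
  -- continuity of E and of A·v
  have hEc : Continuous E := by
    apply Continuous.mul _ hvc
    apply Continuous.div
    · exact ((Complex.continuous_ofReal.comp hA'c).mul
        (continuous_const.mul (Complex.continuous_ofReal.comp hpc))).sub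
        ((Complex.continuous_ofReal.comp hAd.continuous).mul
        (continuous_const.mul (Complex.continuous_ofReal.comp hqc)))
    · exact (continuous_const.mul (Complex.continuous_ofReal.comp hpc)).pow 2
    · exact fun t => pow_ne_zero 2 (hden t)
  have hAvc : Continuous (fun t => (A t : ℂ) * v t) :=
    (Complex.continuous_ofReal.comp hAd.continuous).mul hvc
  -- fundamental theorem of calculus
  have hFTC : (∫ t in (0:ℝ)..(2 * π), ((A t : ℂ) * v t + E t)) = g (2 * π) - g 0 := by
    apply intervalIntegral.integral_eq_sub_of_hasDerivAt
    · exact fun t _ => hgd t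
    · exact (hAvc.add hEc).intervalIntegrable _ _
  -- periodicity: g (2π) = g 0
  have hper : g (2 * π) = g 0 := by
    have hA2 : A (2 * π) = A 0 := by simpa using hAper 0
    have hp2 : p (2 * π) = p 0 := by
      have := hφ'per 0
      simp only [zero_add] at this
      simp [hpdef, this]
    have hψ2 : (ψ (2 * π) : ℝ) = ψ 0 + 2 * π * (m + n) := by
      have := hφper 0
      simp only [zero_add] at this
      simp only [hψdef, this]
      ring
    have hv2 : v (2 * π) = v 0 := by
      rw [hvdef]
      simp only [hψ2]
      push_cast
      rw [mul_add, Complex.exp_add]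
      have : Complex.exp (Complex.I * (2 * π * ((m:ℂ) + (n:ℂ)))) = 1 := by
        have := Complex.exp_int_mul_two_pi_mul_I (m + (n:ℤ))
        convert this using 2
        push_cast
        ring
      rw [this, mul_one]
    simp [hgdef, hudef, hA2, hp2, hv2]
  -- hence ∫ A·v = -∫ E
  have hintE : IntervalIntegrable E volume 0 (2 * π) := hEc.intervalIntegrable _ _
  have hintAv : IntervalIntegrable (fun t => (A t : ℂ) * v t) volume 0 (2 * π) :=
    hAvc.intervalIntegrable _ _
  have hsplit : (∫ t in (0:ℝ)..(2 * π), (A t : ℂ) * v t) = -∫ t in (0:ℝ)..(2 * π), E t := by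
    have := hFTC
    rw [hper, sub_self] at this
    rw [intervalIntegral.integral_add hintAv hintE] at this
    exact eq_neg_of_add_eq_zero_left this
  -- rewrite the goal integrand as A·v
  have hgoal : (∫ t in (0:ℝ)..(2 * π), (A t : ℂ) * Complex.exp (Complex.I * (φ t + n * t)))
      = ∫ t in (0:ℝ)..(2 * π), (A t : ℂ) * v t := by
    apply intervalIntegral.integral_congr
    intro t _
    have : ((ψ t : ℝ) : ℂ) = (φ t : ℂ) + (n : ℂ) * (t : ℂ) := by
      simp only [hψdef]; push_cast; ring
    simp [hvdef, this]
  rw [hgoal, hsplit, norm_neg]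
  -- pointwise bound on ‖E‖
  have hEbound : ∀ t, ‖E t‖ ≤
      |deriv A t| / p t + 2 * A t * |q t| / (p t) ^ 2 := by
    intro t
    have hpt := hp_pos t
    rw [hEdef]
    simp only
    rw [norm_mul, hvnorm t, mul_one, norm_div]
    have hdnorm : ‖(Complex.I * (p t : ℂ)) ^ 2‖ = (p t) ^ 2 := by
      rw [norm_pow, norm_mul, Complex.norm_I, one_mul, Complex.norm_real,
        Real.norm_eq_abs, abs_of_pos hpt]
    rw [hdnorm]
    have hnum : ‖((deriv A t : ℝ) : ℂ) * (Complex.I * (p t : ℂ)) -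
        (A t : ℂ) * (Complex.I * (q t : ℂ))‖ ≤ |deriv A t| * p t + A t * |q t| := by
      refine (norm_sub_le _ _).trans ?_
      rw [norm_mul, norm_mul, norm_mul, norm_mul, Complex.norm_I, one_mul, one_mul,
        Complex.norm_real, Complex.norm_real, Complex.norm_real, Complex.norm_real,
        Real.norm_eq_abs, Real.norm_eq_abs, Real.norm_eq_abs, Real.norm_eq_abs,
        abs_of_pos hpt, abs_of_nonneg (hAnonneg t)]
    have h1 : (|deriv A t| * p t + A t * |q t|) / (p t) ^ 2
        = |deriv A t| / p t + A t * |q t| / (p t) ^ 2 := by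
      field_simp
    have h2 : A t * |q t| / (p t) ^ 2 ≤ 2 * A t * |q t| / (p t) ^ 2 := by
      apply div_le_div_of_nonneg_right ?_ (by positivity)
      nlinarith [hAnonneg t, abs_nonneg (q t)]
    calc ‖((deriv A t : ℝ) : ℂ) * (Complex.I * (p t : ℂ)) -
        (A t : ℂ) * (Complex.I * (q t : ℂ))‖ / (p t) ^ 2
        ≤ (|deriv A t| * p t + A t * |q t|) / (p t) ^ 2 := by
          apply div_le_div_of_nonneg_right hnum (by positivity)
      _ = |deriv A t| / p t + A t * |q t| / (p t) ^ 2 := h1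
      _ ≤ |deriv A t| / p t + 2 * A t * |q t| / (p t) ^ 2 := by linarith
  calc ‖∫ t in (0:ℝ)..(2 * π), E t‖
      ≤ ∫ t in (0:ℝ)..(2 * π), ‖E t‖ :=
        intervalIntegral.norm_integral_le_integral_norm hpi.le
    _ ≤ ∫ t in (0:ℝ)..(2 * π),
          (|deriv A t| / (deriv φ t + n) + 2 * A t * |deriv (deriv φ) t| / (deriv φ t + n) ^ 2) := by
        apply intervalIntegral.integral_mono_on hpi.le
        · exact (hEc.norm).intervalIntegrable _ _
        · apply Continuous.intervalIntegrable
          apply Continuous.add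
          · exact ((_root_.continuous_abs.comp hA'c).div hpc fun t => (hp_pos t).ne')
          · exact ((continuous_const.mul hAd.continuous).mul
              (_root_.continuous_abs.comp hqc)).div (hpc.pow 2)
              fun t => pow_ne_zero 2 (hp_pos t).ne'
        · exact fun t _ => hEbound t
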